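/- Let X be an n-dimensional normed space with closed unit ball K, and let μ be a symmetric Borel probability measure supported on K with concentration function α_μ. Suppose there exists a linear map T : X → ℓ∞^N such that d⁻¹·‖x‖ ≤ ‖Tx‖_∞ ≤ ‖x‖ for all x ∈ X (a d-embedding). Then for every 0 < ε < 1/d with α_μ(ε) > 0, we have N ≥ (1/2)·α_μ(ε)⁻¹·(1 − μ(dε·K)). -/

import Mathlib

open MeasureTheory Metric Set

/-- The `ε`-expansion of a set with respect to a distance function `d`. -/
def expandBy {X : Type*} (d : X → X → ℝ) (A : Set X) (ε : ℝ) : Set X :=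
  {x | ∃ a ∈ A, d x a ≤ ε}

/-- The concentration function of a metric probability space, where the
metric is given by the distance function `d`. -/
noncomputable def concFn {X : Type*} [MeasurableSpace X] (d : X → X → ℝ)
    (μ : Measure X) (ε : ℝ) : ℝ :=
  sSup {r | ∃ A : Set X, MeasurableSet A ∧ (1 : ℝ)/2 ≤ (μ A).toReal ∧
    r = 1 - (μ (expandBy d A ε)).toReal}

/-- `m` is a median of `f` with respect to `μ`. -/
def IsMedian {X : Type*} [MeasurableSpace X] (μ : Measure X) (f : X → ℝ) (m : ℝ) : Prop :=
  (1 : ℝ)/2 ≤ (μ {x | f x ≤ m}).toReal ∧ (1 : ℝ)/2 ≤ (μ {x | m ≤ f x}).toReal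

theorem stmt8 {E : Type*} [NormedAddCommGroup E] [NormedSpace ℝ E]
    [FiniteDimensional ℝ E] [MeasurableSpace E] [BorelSpace E]
    (N : ℕ) (μ : Measure E) [IsProbabilityMeasure μ]
    (hsupp : μ (Metric.closedBall 0 1) = 1)
    (hsymm : μ.map (fun x => -x) = μ)
    (T : E →ₗ[ℝ] (Fin N → ℝ)) (d : ℝ) (hd : 1 ≤ d)
    (hT1 : ∀ x, d⁻¹ * ‖x‖ ≤ ‖T x‖) (hT2 : ∀ x, ‖T x‖ ≤ ‖x‖)
    (ε : ℝ) (hε1 : 0 < ε) (hε2 : ε < 1 / d)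
    (hα : 0 < concFn dist μ ε) :
    (1/2) * (concFn dist μ ε)⁻¹ * (1 - (μ {x | ‖x‖ ≤ d * ε}).toReal) ≤ (N : ℝ) := by
  classical
  set α := concFn dist μ ε with hαdef
  have hdpos : (0:ℝ) < d := lt_of_lt_of_le one_pos hd
  -- the sSup set is bounded above by 1
  have hS : BddAbove {r | ∃ A : Set E, MeasurableSet A ∧ (1:ℝ)/2 ≤ (μ A).toReal ∧
      r = 1 - (μ (expandBy dist A ε)).toReal} := by
    refine ⟨1, ?_⟩
    rintro r ⟨A, -, -, rfl⟩
    have : 0 ≤ (μ (expandBy dist A ε)).toReal := ENNReal.toReal_nonneg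
    linarith
  -- key concentration lemma for 1-Lipschitz linear functionals
  have key : ∀ g : E →ₗ[ℝ] ℝ, (∀ x, |g x| ≤ ‖x‖) → (μ {x | ε < g x}).toReal ≤ α := by
    intro g hg
    have hgc : Continuous g := g.continuous_of_finiteDimensional
    have hmeas0 : MeasurableSet {x : E | g x ≤ 0} :=
      (isClosed_le hgc continuous_const).measurableSet
    have hmeas0' : MeasurableSet {x : E | 0 ≤ g x} :=
      (isClosed_le continuous_const hgc).measurableSet
    have hmeasε : MeasurableSet {x : E | ε < g x} :=
      (isOpen_lt continuous_const hgc).measurableSet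
    -- symmetry: μ {0 ≤ g} = μ {g ≤ 0}
    have hsym : μ {x : E | 0 ≤ g x} = μ {x : E | g x ≤ 0} := by
      conv_lhs => rw [← hsymm]
      rw [Measure.map_apply measurable_neg hmeas0']
      congr 1
      ext x
      simp [neg_nonneg]
    -- median: μ {g ≤ 0} ≥ 1/2
    have hhalf : (1:ℝ)/2 ≤ (μ {x : E | g x ≤ 0}).toReal := by
      have hcov : (univ : Set E) ⊆ {x : E | g x ≤ 0} ∪ {x : E | 0 ≤ g x} := by
        intro x _
        rcases le_total (g x) 0 with h | h
        · exact Or.inl h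
        · exact Or.inr h
      have h1 : (1 : ENNReal) ≤ μ {x : E | g x ≤ 0} + μ {x : E | 0 ≤ g x} := by
        calc (1:ENNReal) = μ univ := (measure_univ).symm
        _ ≤ μ ({x : E | g x ≤ 0} ∪ {x : E | 0 ≤ g x}) := measure_mono hcov
        _ ≤ _ := measure_union_le _ _
      rw [hsym] at h1
      have h2 : (1:ℝ) ≤ (μ {x : E | g x ≤ 0} + μ {x : E | g x ≤ 0}).toReal := by
        have := ENNReal.toReal_mono (by finiteness) h1
        simpa using this
      rw [ENNReal.toReal_add (by finiteness) (by finiteness)] at h2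
      linarith
    -- the expansion of {g ≤ 0} is disjoint from {ε < g}
    have hdisj : Disjoint (expandBy dist {x : E | g x ≤ 0} ε) {x : E | ε < g x} := by
      rw [Set.disjoint_left]
      rintro x ⟨a, ha, hda⟩ hx
      have : g x - g a ≤ ‖x - a‖ := by
        have := hg (x - a)
        simp only [map_sub] at this
        exact le_trans (le_abs_self _) this
      rw [← dist_eq_norm] at this
      simp only [Set.mem_setOf_eq] at ha hx
      linarith
    have hsum : (μ (expandBy dist {x : E | g x ≤ 0} ε)).toReal
        + (μ {x : E | ε < g x}).toReal ≤ 1 := by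
      have := measure_union (μ := μ) hdisj hmeasε
      have hle : μ (expandBy dist {x : E | g x ≤ 0} ε) + μ {x : E | ε < g x} ≤ 1 := by
        rw [← this]
        exact prob_le_one
      have := ENNReal.toReal_mono (by norm_num) hle
      rwa [ENNReal.toReal_add (by finiteness) (by finiteness), ENNReal.toReal_one] at this
    have hmem : (1 - (μ (expandBy dist {x : E | g x ≤ 0} ε)).toReal) ∈
        {r | ∃ A : Set E, MeasurableSet A ∧ (1:ℝ)/2 ≤ (μ A).toReal ∧
          r = 1 - (μ (expandBy dist A ε)).toReal} :=
      ⟨{x : E | g x ≤ 0}, hmeas0, hhalf, rfl⟩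
    have := le_csSup hS hmem
    rw [hαdef]
    unfold concFn
    linarith
  -- coordinate functionals
  set f : Fin N → (E →ₗ[ℝ] ℝ) := fun i => (LinearMap.proj i).comp T with hf
  have hfb : ∀ i x, |f i x| ≤ ‖x‖ := by
    intro i x
    calc |f i x| = ‖T x i‖ := by simp [hf, Real.norm_eq_abs]
    _ ≤ ‖T x‖ := norm_le_pi_norm (T x) i
    _ ≤ ‖x‖ := hT2 x
  set s : Fin N → Set E := fun i => {x | ε < f i x} ∪ {x | ε < (-(f i)) x} with hs
  have hsb : ∀ i, (μ (s i)).toReal ≤ 2 * α := by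
    intro i
    have h1 := key (f i) (hfb i)
    have h2 := key (-(f i)) (fun x => by simpa using hfb i x)
    have := measure_union_le (μ := μ) {x | ε < f i x} {x | ε < (-(f i)) x}
    have h3 := ENNReal.toReal_mono (by finiteness) this
    rw [ENNReal.toReal_add (by finiteness) (by finiteness)] at h3
    calc (μ (s i)).toReal ≤ _ := h3
    _ ≤ 2 * α := by linarith
  -- the big set is covered by the union
  have hcov : {x : E | d * ε < ‖x‖} ⊆ ⋃ i, s i := by
    intro x hx
    simp only [Set.mem_setOf_eq] at hx
    by_contra hns
    have hall : ∀ i, |T x i| ≤ ε := by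
      intro i
      simp only [Set.mem_iUnion, hs, Set.mem_union, Set.mem_setOf_eq, not_exists, not_or,
        not_lt] at hns
      have := hns i
      have h1 : f i x = T x i := rfl
      have h2 : (-(f i)) x = -(T x i) := by simp [hf]
      rw [h1, h2] at this
      exact abs_le.mpr ⟨by linarith [this.2], this.1⟩
    have hTle : ‖T x‖ ≤ ε := by
      rw [pi_norm_le_iff_of_nonneg (le_of_lt hε1)]
      intro i
      simpa [Real.norm_eq_abs] using hall i
    have h1 : ε < d⁻¹ * ‖x‖ := by
      rw [inv_mul_eq_div, lt_div_iff₀ hdpos]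
      nlinarith
    linarith [hT1 x]
  -- measure bound
  have hbig : (μ {x : E | d * ε < ‖x‖}).toReal ≤ (N : ℝ) * (2 * α) := by
    have h1 : μ {x : E | d * ε < ‖x‖} ≤ ∑ i, μ (s i) :=
      le_trans (measure_mono hcov) (measure_iUnion_fintype_le μ s)
    have h2 := ENNReal.toReal_mono (ENNReal.sum_ne_top.mpr (fun i _ => measure_ne_top μ _)) h1
    rw [ENNReal.toReal_sum (fun i _ => measure_ne_top μ _)] at h2
    calc (μ {x : E | d * ε < ‖x‖}).toReal ≤ ∑ i, (μ (s i)).toReal := h2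
    _ ≤ ∑ _i : Fin N, 2 * α := Finset.sum_le_sum (fun i _ => hsb i)
    _ = (N : ℝ) * (2 * α) := by simp [mul_comm]
  -- complement
  have hcompl : 1 - (μ {x : E | ‖x‖ ≤ d * ε}).toReal = (μ {x : E | d * ε < ‖x‖}).toReal := by
    have hm : MeasurableSet {x : E | ‖x‖ ≤ d * ε} :=
      (isClosed_le continuous_norm continuous_const).measurableSet
    have h1 : μ {x : E | ‖x‖ ≤ d * ε} + μ {x : E | ‖x‖ ≤ d * ε}ᶜ = 1 := by
      rw [measure_add_measure_compl hm, measure_univ]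
    have h2 : {x : E | ‖x‖ ≤ d * ε}ᶜ = {x : E | d * ε < ‖x‖} := by
      ext x; simp [not_le]
    rw [h2] at h1
    have := congrArg ENNReal.toReal h1
    rw [ENNReal.toReal_add (by finiteness) (by finiteness), ENNReal.toReal_one] at this
    linarith
  rw [hcompl]
  have hfin : (μ {x : E | d * ε < ‖x‖}).toReal ≤ (N : ℝ) * (2 * α) := hbig
  have hαinv : (0:ℝ) < α⁻¹ := inv_pos.mpr hα
  have hmul := mul_le_mul_of_nonneg_left hfin (le_of_lt (by positivity : (0:ℝ) < (1/2) * α⁻¹))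
  have hinv : α * α⁻¹ = 1 := mul_inv_cancel₀ (ne_of_gt hα)
  calc (1/2) * α⁻¹ * (μ {x : E | d * ε < ‖x‖}).toReal
      ≤ (1/2) * α⁻¹ * ((N : ℝ) * (2 * α)) := hmul
  _ = (N : ℝ) * (α * α⁻¹) := by ring
  _ = (N : ℝ) := by rw [hinv, mul_one]
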